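/- Let A be the structure with domain {u, v} over the signature {E, <} where E^A = {(u,u),(v,v)} (so u and v are not E-equivalent) and <^A = {(u,v)}, and let B be the structure with domain {a, b, c, d} where <^B is the linear order b < c < a < d and E^B is the equivalence relation with classes {a, b} and {c, d}. Then for every finite structure (C; E, <) in which E is an equivalence relation and < is a linear order, it is not the case that C → (B)^A_2. Hence the class of all finite structures consisting of an equivalence relation together with a linear order does not have the Ramsey property. -/

import Mathlib

/-- Embeddings of finite structures with an equivalence relation `E` and a linear order `<`:
injective maps preserving `E` and `<` in both directions. -/
def EOEmb {α β : Type} (Ea la : α → α → Prop) (Eb lb : β → β → Prop) : Type :=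
  {f : α → β // Function.Injective f ∧
    (∀ x y, Eb (f x) (f y) ↔ Ea x y) ∧ (∀ x y, lb (f x) (f y) ↔ la x y)}

/-- Composition of such embeddings. -/
def EOEmb.comp {α β γ : Type} {Ea la : α → α → Prop} {Eb lb : β → β → Prop}
    {Ec lc : γ → γ → Prop} (g : EOEmb Eb lb Ec lc) (f : EOEmb Ea la Eb lb) :
    EOEmb Ea la Ec lc :=
  ⟨g.1 ∘ f.1, g.2.1.comp f.2.1,
    fun x y => by simp only [Function.comp_apply, g.2.2.1, f.2.2.1],
    fun x y => by simp only [Function.comp_apply, g.2.2.2, f.2.2.2]⟩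

/-- The structure `A` with domain `{u, v}` (`u = 0`, `v = 1`): `E^A = {(u,u),(v,v)}`. -/
def EA : Fin 2 → Fin 2 → Prop := fun x y => x = y

/-- `<^A = {(u,v)}`. -/
def ltA : Fin 2 → Fin 2 → Prop := fun x y => x = 0 ∧ y = 1

/-- The structure `B` with domain `{a, b, c, d}` (`a = 0`, `b = 1`, `c = 2`, `d = 3`):
`E^B` has the classes `{a, b}` and `{c, d}`. -/
def EB : Fin 4 → Fin 4 → Prop := fun x y => x.val / 2 = y.val / 2

/-- The position of each element of `B` in the linear order `b < c < a < d`. -/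
def rankB : Fin 4 → ℕ := ![2, 0, 1, 3]

/-- `<^B` is the linear order `b < c < a < d`. -/
def ltB : Fin 4 → Fin 4 → Prop := fun x y => rankB x < rankB y

/-- The embedding of `A` into `B` sending `(u, v)` to `(b, c)`. -/
def embBC : EOEmb EA ltA EB ltB :=
  ⟨![1, 2],
    by intro x y h; fin_cases x <;> fin_cases y <;> simp_all,
    by intro x y; fin_cases x <;> fin_cases y <;> simp [EB, EA] <;> decide,
    by intro x y; fin_cases x <;> fin_cases y <;> simp [ltB, ltA, rankB] <;> decide⟩

/-- The embedding of `A` into `B` sending `(u, v)` to `(c, a)`. -/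
def embCA : EOEmb EA ltA EB ltB :=
  ⟨![2, 0],
    by intro x y h; fin_cases x <;> fin_cases y <;> simp_all,
    by intro x y; fin_cases x <;> fin_cases y <;> simp [EB, EA] <;> decide,
    by intro x y; fin_cases x <;> fin_cases y <;> simp [ltB, ltA, rankB] <;> decide⟩

/-- No finite structure `(C; E, <)` with `E` an equivalence relation and `<` a linear order
satisfies `C → (B)^A_2`; hence the class of finite structures consisting of an equivalence
relation with a linear order does not have the Ramsey property. -/
theorem stmt18 (γ : Type) [Finite γ] (Eg lg : γ → γ → Prop)
    (hE : Equivalence Eg) (hl : IsStrictTotalOrder γ lg) :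
    ¬ ∀ χ : EOEmb EA ltA Eg lg → Fin 2,
        ∃ f : EOEmb EB ltB Eg lg,
          ∀ e₁ e₂ : EOEmb EA ltA EB ltB, χ (f.comp e₁) = χ (f.comp e₂) := by
  intro H
  classical
  let s : Setoid γ := ⟨Eg, hE⟩
  let rep : γ → γ := fun x => (Quotient.mk s x).out
  have hrep_eq : ∀ x y, Eg x y → rep x = rep y := by
    intro x y h
    simp only [rep]
    congr 1
    exact Quotient.sound h
  have hrep_ne : ∀ x y, ¬ Eg x y → rep x ≠ rep y := by
    intro x y h hc
    apply h
    have h1 := congrArg (Quotient.mk s) hc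
    simp only [rep, Quotient.out_eq] at h1
    exact Quotient.exact h1
  obtain ⟨f, hf⟩ :=
    H (fun e => if lg (rep (e.1 0)) (rep (e.1 1)) then 0 else 1)
  have key := hf embBC embCA
  simp only [EOEmb.comp, embBC, embCA, Function.comp_apply] at key
  have h01 : (![(1 : Fin 4), 2] : Fin 2 → Fin 4) 0 = 1 := rfl
  have h02 : (![(1 : Fin 4), 2] : Fin 2 → Fin 4) 1 = 2 := rfl
  have h11 : (![(2 : Fin 4), 0] : Fin 2 → Fin 4) 0 = 2 := rfl
  have h12 : (![(2 : Fin 4), 0] : Fin 2 → Fin 4) 1 = 0 := rfl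
  simp only [h01, h02, h11, h12] at key
  -- f 0 and f 1 are equivalent, f 1 and f 2 are not
  have hEg01 : Eg (f.1 0) (f.1 1) := (f.2.2.1 0 1).mpr (by simp [EB])
  have hEg12 : ¬ Eg (f.1 1) (f.1 2) := fun h => (by simp [EB] : ¬ EB 1 2) ((f.2.2.1 1 2).mp h)
  have hr10 : rep (f.1 1) = rep (f.1 0) := (hrep_eq _ _ hEg01).symm
  have hrne : rep (f.1 1) ≠ rep (f.1 2) := hrep_ne _ _ hEg12
  rcases (show lg (rep (f.1 1)) (rep (f.1 2)) ∨ rep (f.1 1) = rep (f.1 2) ∨ lg (rep (f.1 2)) (rep (f.1 1)) by have := hl.trichotomous (rep (f.1 1)) (rep (f.1 2)); tauto) with h | h | h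
  · have h' : ¬ lg (rep (f.1 2)) (rep (f.1 0)) := by
      rw [← hr10]
      intro h'
      exact hl.irrefl _ (hl.trans _ _ _ h h')
    rw [if_pos h, if_neg h'] at key
    exact absurd key (by decide)
  · exact hrne h
  · have h' : ¬ lg (rep (f.1 1)) (rep (f.1 2)) := by
      intro h''
      exact hl.irrefl _ (hl.trans _ _ _ h h'')
    have h2 : lg (rep (f.1 2)) (rep (f.1 0)) := by rw [← hr10]; exact h
    rw [if_neg h', if_pos h2] at key
    exact absurd key (by decide)
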